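/- arXiv:1710.05559 — 8 statements merged into one kernel-verified Lean document; each statement's English description precedes it below -/
import Mathlib

section
/- Let d ≥ 1, let U : ℝ^d → ℝ be continuously differentiable, and let γ > 0. Then for all x ∈ ℝ^d, ‖H_{γ,c}(x) − ∇U(x)‖ ≤ γ(Σ_{i=1}^d (∂_iU(x))⁴)^{1/2} ≤ γ‖∇U(x)‖², where H_{γ,c}(x) has i-th coordinate ∂_iU(x)/(1 + γ|∂_iU(x)|). -/
/-- The coordinate-wise tamed drift H_{γ,c}, with i-th coordinate
∂_iU(x)/(1 + γ|∂_iU(x)|), satisfies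
‖H_{γ,c}(x) − ∇U(x)‖ ≤ γ(Σ_i (∂_iU(x))⁴)^{1/2} ≤ γ‖∇U(x)‖². -/
theorem tulac_tamed_drift_close
    (d : ℕ) (hd : 1 ≤ d) (U : EuclideanSpace ℝ (Fin d) → ℝ)
    (hU : ContDiff ℝ 1 U) (γ : ℝ) (hγ : 0 < γ) :
    ∀ x : EuclideanSpace ℝ (Fin d),
      ‖((WithLp.equiv 2 (Fin d → ℝ)).symm
            (fun i => gradient U x i / (1 + γ * |gradient U x i|))
          : EuclideanSpace ℝ (Fin d)) - gradient U x‖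
          ≤ γ * Real.sqrt (∑ i, gradient U x i ^ 4)
      ∧ γ * Real.sqrt (∑ i, gradient U x i ^ 4) ≤ γ * ‖gradient U x‖ ^ 2 := by
  intro x
  set g : Fin d → ℝ := fun i => gradient U x i with hg
  have hpos : ∀ i, 0 < 1 + γ * |g i| := fun i =>
    lt_of_lt_of_le one_pos (le_add_of_nonneg_right (by positivity))
  have key : ∀ i, |g i / (1 + γ * |g i|) - g i| ≤ γ * (g i) ^ 2 := by
    intro i
    have hne : (1 + γ * |g i|) ≠ 0 := (hpos i).ne'
    have heq : g i / (1 + γ * |g i|) - g i = -(γ * (g i * |g i|)) / (1 + γ * |g i|) := by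
      field_simp
      ring
    rw [heq, abs_div, abs_of_pos (hpos i), abs_neg, abs_mul, abs_mul, abs_of_pos hγ,
      abs_abs]
    have h1 : γ * (|g i| * |g i|) = γ * (g i) ^ 2 := by
      rw [← abs_mul, abs_mul_self]; ring
    rw [h1]
    have h2 : γ * (g i) ^ 2 / (1 + γ * |g i|) ≤ γ * (g i) ^ 2 / 1 := by
      apply div_le_div_of_nonneg_left (by positivity) one_pos
      have : (0:ℝ) ≤ γ * |g i| := by positivity
      linarith
    simpa using h2
  constructor
  · have hnorm : ‖((WithLp.equiv 2 (Fin d → ℝ)).symm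
        (fun i => g i / (1 + γ * |g i|)) : EuclideanSpace ℝ (Fin d)) - gradient U x‖
        = Real.sqrt (∑ i, (g i / (1 + γ * |g i|) - g i) ^ 2) := by
      rw [EuclideanSpace.norm_eq]
      congr 1
      apply Finset.sum_congr rfl
      intro i _
      rw [Real.norm_eq_abs, sq_abs]
      rfl
    rw [hnorm]
    have hb : Real.sqrt (∑ i, (g i / (1 + γ * |g i|) - g i) ^ 2)
        ≤ Real.sqrt (∑ i, (γ * (g i) ^ 2) ^ 2) := by
      apply Real.sqrt_le_sqrt
      apply Finset.sum_le_sum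
      intro i _
      rw [← sq_abs (g i / (1 + γ * |g i|) - g i)]
      exact pow_le_pow_left₀ (abs_nonneg _) (key i) 2
    refine hb.trans_eq ?_
    have : ∑ i, (γ * (g i) ^ 2) ^ 2 = γ ^ 2 * ∑ i, (g i) ^ 4 := by
      rw [Finset.mul_sum]; apply Finset.sum_congr rfl; intro i _; ring
    rw [this, Real.sqrt_mul (by positivity), Real.sqrt_sq hγ.le]
  · apply mul_le_mul_of_nonneg_left _ hγ.le
    have h1 : ‖gradient U x‖ ^ 2 = ∑ i, (g i) ^ 2 := by
      rw [EuclideanSpace.norm_eq, Real.sq_sqrt (by positivity)]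
      apply Finset.sum_congr rfl
      intro i _
      rw [Real.norm_eq_abs, sq_abs]
    rw [h1]
    rw [show (∑ i, (g i) ^ 4) = ∑ i, ((g i) ^ 2) ^ 2 by
      apply Finset.sum_congr rfl; intro i _; ring]
    have h2 : ∑ i, ((g i) ^ 2) ^ 2 ≤ (∑ i, (g i) ^ 2) ^ 2 :=
      Finset.sum_sq_le_sq_sum_of_nonneg (fun i _ => sq_nonneg _)
    calc Real.sqrt (∑ i, ((g i) ^ 2) ^ 2) ≤ Real.sqrt ((∑ i, (g i) ^ 2) ^ 2) :=
          Real.sqrt_le_sqrt h2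
      _ = ∑ i, (g i) ^ 2 := Real.sqrt_sq (by positivity)
end

section
/- Let d ≥ 1, let U : ℝ^d → ℝ be continuously differentiable and let γ > 0. Suppose there exist κ > 0 and M₁ ≥ 0 such that ⟨x, ∇U(x)⟩ ≥ κ‖x‖‖∇U(x)‖ whenever ‖x‖ ≥ M₁, and there exist C > 0 and M₂ ≥ 0 such that ‖∇U(x)‖ ≥ C whenever ‖x‖ ≥ M₂. Then for all x ∈ ℝ^d with ‖x‖ ≥ max(κ^{-1}, M₁, M₂), one has ⟨x/‖x‖, H_γ(x)⟩ − (γ/(2‖x‖))‖H_γ(x)‖² ≥ κC/(2(1 + γC)), where H_γ(x) = ∇U(x)/(1 + γ‖∇U(x)‖). -/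
open RealInnerProductSpace

/-- Under a radial lower bound on ⟨x, ∇U(x)⟩ and a lower bound on
‖∇U(x)‖ at infinity, the tamed drift H_γ satisfies the discrete drift condition
⟨x/‖x‖, H_γ(x)⟩ − (γ/(2‖x‖))‖H_γ(x)‖² ≥ κC/(2(1 + γC)) far from the origin. -/
theorem tula_drift_condition_Hgamma
    (d : ℕ) (hd : 1 ≤ d) (U : EuclideanSpace ℝ (Fin d) → ℝ)
    (hU : ContDiff ℝ 1 U) (γ : ℝ) (hγ : 0 < γ)
    (κ : ℝ) (hκ : 0 < κ) (M₁ : ℝ) (hM₁ : 0 ≤ M₁)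
    (h1 : ∀ x : EuclideanSpace ℝ (Fin d), M₁ ≤ ‖x‖ →
      κ * ‖x‖ * ‖gradient U x‖ ≤ ⟪x, gradient U x⟫)
    (C : ℝ) (hC : 0 < C) (M₂ : ℝ) (hM₂ : 0 ≤ M₂)
    (h2 : ∀ x : EuclideanSpace ℝ (Fin d), M₂ ≤ ‖x‖ → C ≤ ‖gradient U x‖) :
    ∀ x : EuclideanSpace ℝ (Fin d), max κ⁻¹ (max M₁ M₂) ≤ ‖x‖ →
      κ * C / (2 * (1 + γ * C)) ≤
        ⟪‖x‖⁻¹ • x, (1 + γ * ‖gradient U x‖)⁻¹ • gradient U x⟫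
          - γ / (2 * ‖x‖) * ‖(1 + γ * ‖gradient U x‖)⁻¹ • gradient U x‖ ^ 2 := by
  intro x hx
  have hrκ : κ⁻¹ ≤ ‖x‖ := (le_max_left _ _).trans hx
  have hr0 : 0 < ‖x‖ := lt_of_lt_of_le (inv_pos.mpr hκ) hrκ
  have hM1 : M₁ ≤ ‖x‖ := ((le_max_left M₁ M₂).trans (le_max_right _ _)).trans hx
  have hM2 : M₂ ≤ ‖x‖ := ((le_max_right M₁ M₂).trans (le_max_right _ _)).trans hx
  set g := ‖gradient U x‖ with hgdef
  have hg : C ≤ g := h2 x hM2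
  have hg0 : 0 < g := lt_of_lt_of_le hC hg
  have hip : κ * ‖x‖ * g ≤ ⟪x, gradient U x⟫ := h1 x hM1
  have ha : (0:ℝ) < 1 + γ * g := by positivity
  have hrk : ‖x‖⁻¹ ≤ κ := by
    rw [inv_le_comm₀ hr0 hκ]; exact hrκ
  rw [real_inner_smul_left, real_inner_smul_right, norm_smul,
    Real.norm_eq_abs, abs_of_pos (inv_pos.mpr ha)]
  set r := ‖x‖
  have step1 : κ * g * (1 + γ * g)⁻¹ ≤ r⁻¹ * ((1 + γ * g)⁻¹ * ⟪x, gradient U x⟫) := by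
    have h := mul_le_mul_of_nonneg_left hip
      (le_of_lt (mul_pos (inv_pos.mpr hr0) (inv_pos.mpr ha)))
    calc κ * g * (1 + γ * g)⁻¹
        = r⁻¹ * (1 + γ * g)⁻¹ * (κ * r * g) := by
          field_simp
      _ ≤ r⁻¹ * (1 + γ * g)⁻¹ * ⟪x, gradient U x⟫ := h
      _ = r⁻¹ * ((1 + γ * g)⁻¹ * ⟪x, gradient U x⟫) := by ring
  have step2 : γ / (2 * r) * ((1 + γ * g)⁻¹ * g) ^ 2
      ≤ κ * γ * g ^ 2 * ((1 + γ * g)⁻¹) ^ 2 / 2 := by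
    have h := mul_le_mul_of_nonneg_right hrk
      (by positivity : (0:ℝ) ≤ γ * ((1 + γ * g)⁻¹ * g) ^ 2 / 2)
    calc γ / (2 * r) * ((1 + γ * g)⁻¹ * g) ^ 2
        = r⁻¹ * (γ * ((1 + γ * g)⁻¹ * g) ^ 2 / 2) := by
          field_simp
      _ ≤ κ * (γ * ((1 + γ * g)⁻¹ * g) ^ 2 / 2) := h
      _ = κ * γ * g ^ 2 * ((1 + γ * g)⁻¹) ^ 2 / 2 := by ring
  have step3 : κ * C / (2 * (1 + γ * C)) ≤
      κ * g * (1 + γ * g)⁻¹ - κ * γ * g ^ 2 * ((1 + γ * g)⁻¹) ^ 2 / 2 := by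
    set u := (1 + γ * g)⁻¹ with hu
    have hu1 : u * (1 + γ * g) = 1 := inv_mul_cancel₀ (ne_of_gt ha)
    have hu0 : 0 < u := inv_pos.mpr ha
    have hau : (1 + γ * g) * u = 1 := mul_inv_cancel₀ (ne_of_gt ha)
    have h : C * (1 + γ * g) ^ 2 ≤ (2 * g * (1 + γ * g) - γ * g ^ 2) * (1 + γ * C) := by
      nlinarith [mul_le_mul hg hg hC.le hg0.le]
    rw [div_le_iff₀ (by positivity : (0:ℝ) < 2 * (1 + γ * C))]
    calc κ * C = κ * C * ((1 + γ * g) * u) ^ 2 := by rw [hau]; ring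
      _ = κ * (C * (1 + γ * g) ^ 2) * u ^ 2 := by ring
      _ ≤ κ * ((2 * g * (1 + γ * g) - γ * g ^ 2) * (1 + γ * C)) * u ^ 2 :=
          mul_le_mul_of_nonneg_right (mul_le_mul_of_nonneg_left h hκ.le) (sq_nonneg u)
      _ = (κ * g * ((1 + γ * g) * u) * u - κ * γ * g ^ 2 * u ^ 2 / 2) * (2 * (1 + γ * C)) := by
          ring
      _ = (κ * g * u - κ * γ * g ^ 2 * u ^ 2 / 2) * (2 * (1 + γ * C)) := by rw [hau]; ring
  linarith [step1, step2, step3]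
end

section
/- Let d ≥ 1, y ∈ ℝ^d, a > 0 and γ > 0. Then (2π)^{-d/2} ∫_{ℝ^d} exp(a(1 + ‖y + √(2γ)z‖²)^{1/2}) e^{-‖z‖²/2} dz ≤ e^{a²γ} exp(a(1 + ‖y‖² + 2γd)^{1/2}). -/
open Real MeasureTheory

/-- 1-d Gaussian with quadratic exponent: pointwise rewriting by completing the square. -/
lemma quad_exp_eq {b : ℝ} (hb : 0 < b) (β K : ℝ) :
    (fun t : ℝ => Real.exp (-(b * t ^ 2) + β * t + K))
      = fun t : ℝ => Real.exp (β ^ 2 / (4 * b) + K) *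
          Real.exp (-b * (t - β / (2 * b)) ^ 2) := by
  funext t
  rw [← Real.exp_add]
  congr 1
  field_simp
  ring

lemma quad_integrable {b : ℝ} (hb : 0 < b) (β K : ℝ) :
    Integrable (fun t : ℝ => Real.exp (-(b * t ^ 2) + β * t + K)) := by
  rw [quad_exp_eq hb]
  exact ((integrable_exp_neg_mul_sq hb).comp_sub_right (β / (2 * b))).const_mul _

lemma quad_integral {b : ℝ} (hb : 0 < b) (β K : ℝ) :
    ∫ t : ℝ, Real.exp (-(b * t ^ 2) + β * t + K)
      = Real.sqrt (π / b) * Real.exp (β ^ 2 / (4 * b) + K) := by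
  rw [quad_exp_eq hb, integral_const_mul _ _,
    integral_sub_right_eq_self (fun t : ℝ => Real.exp (-b * t ^ 2)) (β / (2 * b)),
    integral_gaussian]
  ring

/-- Gaussian log-Sobolev/concentration bound:
(2π)^{-d/2} ∫ exp(a(1 + ‖y + √(2γ)z‖²)^{1/2}) e^{-‖z‖²/2} dz
  ≤ e^{a²γ} exp(a(1 + ‖y‖² + 2γd)^{1/2}). -/
theorem gaussian_exp_lipschitz_moment_bound
    (d : ℕ) (hd : 1 ≤ d) (y : EuclideanSpace ℝ (Fin d)) (a γ : ℝ)
    (ha : 0 < a) (hγ : 0 < γ) :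
    (2 * Real.pi) ^ (-(d : ℝ) / 2) *
        ∫ z : EuclideanSpace ℝ (Fin d),
          Real.exp (a * Real.sqrt (1 + ‖y + Real.sqrt (2 * γ) • z‖ ^ 2)) *
            Real.exp (-‖z‖ ^ 2 / 2)
      ≤ Real.exp (a ^ 2 * γ) *
          Real.exp (a * Real.sqrt (1 + ‖y‖ ^ 2 + 2 * γ * d)) := by
  have hπ := Real.pi_pos
  set c := Real.sqrt (2 * γ) with hc
  have hc2 : c ^ 2 = 2 * γ := Real.sq_sqrt (by linarith)
  set A := 1 + ‖y‖ ^ 2 + 2 * γ * (d : ℝ) with hA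
  have hdR : (1 : ℝ) ≤ (d : ℝ) := by exact_mod_cast hd
  have hA1 : 1 ≤ A := by nlinarith [sq_nonneg ‖y‖]
  have hApos : (0 : ℝ) < A := by linarith
  have hsApos : 0 < Real.sqrt A := Real.sqrt_pos.mpr hApos
  set D := 2 * Real.sqrt A + 4 * a * γ with hD
  have hDpos : 0 < D := by positivity
  set s := a / D with hs
  have hspos : 0 < s := div_pos ha hDpos
  have h1u : 1 - 4 * s * γ = 2 * Real.sqrt A / D := by
    rw [hs, hD]; field_simp; ring
  have h1upos : 0 < 1 - 4 * s * γ := by rw [h1u]; positivity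
  set b := (1 - 2 * s * c ^ 2) / 2 with hb
  have h2b : 2 * b = 1 - 4 * s * γ := by rw [hb, hc2]; ring
  have hbpos : 0 < b := by linarith
  -- per-coordinate functions
  set F : Fin d → ℝ → ℝ := fun i t =>
    Real.exp (-(b * t ^ 2) + (2 * s * c * y i) * t + s * (y i) ^ 2) with hF
  have hnorm : ∀ w : EuclideanSpace ℝ (Fin d), ‖w‖ ^ 2 = ∑ i, (w i) ^ 2 := by
    intro w
    rw [EuclideanSpace.norm_eq, Real.sq_sqrt (by positivity)]
    exact Finset.sum_congr rfl fun i _ => by rw [Real.norm_eq_abs, sq_abs]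
  -- pointwise product form of the dominating integrand
  have key : ∀ z : EuclideanSpace ℝ (Fin d),
      Real.exp (s * (1 + ‖y + c • z‖ ^ 2)) * Real.exp (-‖z‖ ^ 2 / 2)
        = Real.exp s * ∏ i, F i (z i) := by
    intro z
    have hco : ∀ i, (y + c • z) i = y i + c * z i := fun i => rfl
    simp only [hF]
    rw [hnorm, hnorm, ← Real.exp_sum, ← Real.exp_add, ← Real.exp_add]
    congr 1
    have hsum : ∑ i, (-(b * (z i) ^ 2) + (2 * s * c * y i) * (z i) + s * (y i) ^ 2)
        = ∑ i, (s * ((y + c • z) i) ^ 2 - (z i) ^ 2 / 2) :=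
      Finset.sum_congr rfl fun i _ => by rw [hco, hb]; ring
    rw [hsum, Finset.sum_sub_distrib, ← Finset.mul_sum, ← Finset.sum_div]
    ring
  -- integrability and value of the dominating integral
  have hFint : ∀ i, Integrable (F i) := fun i => quad_integrable hbpos _ _
  have hmp : MeasurePreserving (MeasurableEquiv.toLp 2 (Fin d → ℝ)) :=
    (EuclideanSpace.volume_preserving_symm_measurableEquiv_toLp (Fin d)).symm
  have hemb := (MeasurableEquiv.toLp 2 (Fin d → ℝ)).measurableEmbedding
  set G : EuclideanSpace ℝ (Fin d) → ℝ := fun z =>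
    Real.exp (s * (1 + ‖y + c • z‖ ^ 2)) * Real.exp (-‖z‖ ^ 2 / 2) with hG
  have hGcomp : (fun x : Fin d → ℝ =>
      G ((MeasurableEquiv.toLp 2 (Fin d → ℝ)) x))
        = fun x : Fin d → ℝ => Real.exp s * ∏ i, F i (x i) := by
    funext x
    exact key ((MeasurableEquiv.toLp 2 (Fin d → ℝ)) x)
  have hGint : Integrable G := by
    rw [← hmp.integrable_comp_emb hemb]
    have hc2' : G ∘ ⇑(MeasurableEquiv.toLp 2 (Fin d → ℝ))
        = fun x : Fin d → ℝ => Real.exp s * ∏ i, F i (x i) := funext fun x => key _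
    rw [hc2']
    exact (Integrable.fintype_prod hFint).const_mul _
  have hGval : ∫ z, G z
      = Real.exp s * (Real.sqrt (π / b) ^ d *
          Real.exp ((s / (2 * b)) * ‖y‖ ^ 2)) := by
    rw [← hmp.integral_comp' G]
    show (∫ x : Fin d → ℝ, G ((MeasurableEquiv.toLp 2 (Fin d → ℝ)) x))
      = _
    rw [hGcomp, integral_const_mul _ _,
      integral_fintype_prod_volume_eq_prod (ι := Fin d) F]
    congr 1
    have hval : ∀ i, ∫ t : ℝ, F i t
        = Real.sqrt (π / b) * Real.exp ((s / (2 * b)) * (y i) ^ 2) := by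
      intro i
      rw [hF]
      rw [quad_integral hbpos]
      congr 2
      field_simp
      ring
    rw [Finset.prod_congr rfl fun i _ => hval i, Finset.prod_mul_distrib,
      Finset.prod_const, Finset.card_univ, Fintype.card_fin, ← Real.exp_sum,
      ← Finset.mul_sum, ← hnorm]
  -- pointwise domination
  have hdom : ∀ z : EuclideanSpace ℝ (Fin d),
      Real.exp (a * Real.sqrt (1 + ‖y + c • z‖ ^ 2)) * Real.exp (-‖z‖ ^ 2 / 2)
        ≤ Real.exp (a ^ 2 / (4 * s)) * G z := by
    intro z
    rw [hG, ← mul_assoc]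
    refine mul_le_mul_of_nonneg_right ?_ (Real.exp_nonneg _)
    rw [← Real.exp_add, Real.exp_le_exp]
    set X := Real.sqrt (1 + ‖y + c • z‖ ^ 2) with hX
    have hXsq : X ^ 2 = 1 + ‖y + c • z‖ ^ 2 := Real.sq_sqrt (by positivity)
    rw [← hXsq]
    rw [div_add' _ _ _ (by positivity : (4 : ℝ) * s ≠ 0), le_div_iff₀ (by positivity)]
    nlinarith [sq_nonneg (2 * s * X - a)]
  -- integral comparison
  have hmono : (∫ z : EuclideanSpace ℝ (Fin d),
      Real.exp (a * Real.sqrt (1 + ‖y + c • z‖ ^ 2)) * Real.exp (-‖z‖ ^ 2 / 2))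
        ≤ Real.exp (a ^ 2 / (4 * s)) * ∫ z, G z := by
    rw [← integral_const_mul _ _]
    refine integral_mono_of_nonneg (ae_of_all _ fun z => by positivity)
      (hGint.const_mul _) (ae_of_all _ hdom)
  clear hGcomp key hFint hF F hemb hmp hdom
  clear_value G b s D A c
  -- the power prefactor
  have hpow : (2 * Real.pi) ^ (-(d : ℝ) / 2) * Real.sqrt (π / b) ^ d
      ≤ Real.exp ((d : ℝ) / 2 * (4 * s * γ / (1 - 4 * s * γ))) := by
    have h1 : Real.sqrt (π / b) ^ d = (π / b) ^ ((d : ℝ) / 2) := by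
      rw [Real.sqrt_eq_rpow, ← Real.rpow_natCast ((π / b) ^ ((1:ℝ)/2)) d,
        ← Real.rpow_mul (by positivity)]
      congr 1
      ring
    have h2 : (2 * Real.pi) ^ (-(d : ℝ) / 2) = ((2 * Real.pi) ^ ((d : ℝ) / 2))⁻¹ := by
      rw [neg_div, Real.rpow_neg (by positivity)]
    rw [h1, h2, inv_mul_eq_div, ← Real.div_rpow (by positivity) (by positivity)]
    have h3 : π / b / (2 * π) = 1 / (1 - 4 * s * γ) := by
      rw [← h2b]; field_simp
    rw [h3]
    have h4 : 1 / (1 - 4 * s * γ) ≤ Real.exp (4 * s * γ / (1 - 4 * s * γ)) := by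
      have : 1 / (1 - 4 * s * γ) = 4 * s * γ / (1 - 4 * s * γ) + 1 := by
        field_simp; ring
      rw [this]
      exact Real.add_one_le_exp _
    calc (1 / (1 - 4 * s * γ)) ^ ((d : ℝ) / 2)
        ≤ (Real.exp (4 * s * γ / (1 - 4 * s * γ))) ^ ((d : ℝ) / 2) :=
          Real.rpow_le_rpow (by positivity) h4 (by positivity)
      _ = Real.exp ((d : ℝ) / 2 * (4 * s * γ / (1 - 4 * s * γ))) := by
          rw [← Real.exp_mul, mul_comm]
  -- scalar bookkeeping
  have hD0 : D ≠ 0 := hDpos.ne'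
  have hsA0 : Real.sqrt A ≠ 0 := hsApos.ne'
  have hQ : s / (1 - 4 * s * γ) = a / (2 * Real.sqrt A) := by
    rw [h1u, hs, div_div_div_cancel_right₀]
    exact hD0
  have hQA : a / (2 * Real.sqrt A) * A = a * Real.sqrt A / 2 := by
    rw [div_mul_eq_mul_div, div_eq_div_iff (by positivity) (by norm_num : (2:ℝ) ≠ 0)]
    linear_combination (-2 * a) * Real.sq_sqrt hApos.le
  have hv1 : a ^ 2 / (4 * s) = a * Real.sqrt A / 2 + a ^ 2 * γ := by
    rw [hs, div_eq_iff (by positivity : (4:ℝ) * (a / D) ≠ 0)]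
    rw [hD]
    field_simp
    ring
  have hsleQ : s ≤ a / (2 * Real.sqrt A) := by
    rw [← hQ, le_div_iff₀ h1upos]
    exact mul_le_of_le_one_right hspos.le (by linarith [mul_pos (mul_pos (by norm_num : (0:ℝ) < 4) hspos) hγ])
  have hfinal : (d : ℝ) / 2 * (4 * s * γ / (1 - 4 * s * γ))
      + (a ^ 2 / (4 * s) + (s + s / (2 * b) * ‖y‖ ^ 2))
        ≤ a ^ 2 * γ + a * Real.sqrt A := by
    have e1 : (d : ℝ) / 2 * (4 * s * γ / (1 - 4 * s * γ))
        = (s / (1 - 4 * s * γ)) * (2 * γ * d) := by ring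
    have e2 : s / (2 * b) = s / (1 - 4 * s * γ) := by rw [h2b]
    have e3 : a / (2 * Real.sqrt A) * A
        = a / (2 * Real.sqrt A) + a / (2 * Real.sqrt A) * ‖y‖ ^ 2
          + a / (2 * Real.sqrt A) * (2 * γ * d) := by rw [hA]; ring
    have hy2 : (0 : ℝ) ≤ ‖y‖ ^ 2 := sq_nonneg _
    have hQle : s / (1 - 4 * s * γ) * ‖y‖ ^ 2
        ≤ a / (2 * Real.sqrt A) * ‖y‖ ^ 2 := by rw [hQ]
    rw [e1, e2, hv1, hQ]
    linarith [hQA, e3, hsleQ]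
  -- assemble
  calc (2 * Real.pi) ^ (-(d : ℝ) / 2) *
        ∫ z : EuclideanSpace ℝ (Fin d),
          Real.exp (a * Real.sqrt (1 + ‖y + c • z‖ ^ 2)) * Real.exp (-‖z‖ ^ 2 / 2)
      ≤ (2 * Real.pi) ^ (-(d : ℝ) / 2) *
          (Real.exp (a ^ 2 / (4 * s)) * (Real.exp s * (Real.sqrt (π / b) ^ d *
            Real.exp ((s / (2 * b)) * ‖y‖ ^ 2)))) := by
        refine mul_le_mul_of_nonneg_left ?_ (by positivity)
        rw [← hGval]; exact hmono
    _ = ((2 * Real.pi) ^ (-(d : ℝ) / 2) * Real.sqrt (π / b) ^ d) *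
          Real.exp (a ^ 2 / (4 * s) + (s + s / (2 * b) * ‖y‖ ^ 2)) := by
        rw [Real.exp_add, Real.exp_add]; ring
    _ ≤ Real.exp ((d : ℝ) / 2 * (4 * s * γ / (1 - 4 * s * γ))) *
          Real.exp (a ^ 2 / (4 * s) + (s + s / (2 * b) * ‖y‖ ^ 2)) :=
        mul_le_mul_of_nonneg_right hpow (Real.exp_nonneg _)
    _ = Real.exp ((d : ℝ) / 2 * (4 * s * γ / (1 - 4 * s * γ))
          + (a ^ 2 / (4 * s) + (s + s / (2 * b) * ‖y‖ ^ 2))) := by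
        rw [← Real.exp_add]
    _ ≤ Real.exp (a ^ 2 * γ + a * Real.sqrt A) := Real.exp_le_exp.mpr hfinal
    _ = Real.exp (a ^ 2 * γ) * Real.exp (a * Real.sqrt A) := Real.exp_add _ _
end

section
/- Let d ≥ 1, γ > 0, κ > 0, and let x, h ∈ ℝ^d satisfy ⟨x, h⟩ − (γ/2)‖h‖² ≥ κ‖x‖. If M ≥ 2d/κ and ‖x‖ ≥ M, then (1 + ‖x − γh‖² + 2γd)^{1/2} ≤ (1 + ‖x‖²)^{1/2} − γκM/(2(1 + M²)^{1/2}). -/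
open RealInnerProductSpace

/-- If ⟨x, h⟩ − (γ/2)‖h‖² ≥ κ‖x‖, M ≥ 2d/κ and ‖x‖ ≥ M, then
(1 + ‖x − γh‖² + 2γd)^{1/2} ≤ (1 + ‖x‖²)^{1/2} − γκM/(2(1 + M²)^{1/2}). -/
theorem euler_step_lyapunov_contraction
    (d : ℕ) (hd : 1 ≤ d) (γ κ : ℝ) (hγ : 0 < γ) (hκ : 0 < κ)
    (x h : EuclideanSpace ℝ (Fin d))
    (hxh : κ * ‖x‖ ≤ ⟪x, h⟫ - γ / 2 * ‖h‖ ^ 2)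
    (M : ℝ) (hM : 2 * d / κ ≤ M) (hx : M ≤ ‖x‖) :
    Real.sqrt (1 + ‖x - γ • h‖ ^ 2 + 2 * γ * d)
      ≤ Real.sqrt (1 + ‖x‖ ^ 2) - γ * κ * M / (2 * Real.sqrt (1 + M ^ 2)) := by
  have hd1 : (1:ℝ) ≤ d := by exact_mod_cast hd
  set r := ‖x‖ with hrdef
  have hr0 : (0:ℝ) ≤ r := norm_nonneg x
  have hM0 : 0 < M := lt_of_lt_of_le (by positivity) hM
  have hdκ : 2 * (d:ℝ) ≤ κ * M := by
    rw [div_le_iff₀ hκ] at hM; linarith [hM, mul_comm M κ]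
  have hexp : ‖x - γ • h‖ ^ 2 = r ^ 2 - 2 * γ * (⟪x, h⟫ - γ / 2 * ‖h‖ ^ 2) := by
    rw [norm_sub_sq_real, real_inner_smul_right, norm_smul, Real.norm_eq_abs,
      abs_of_pos hγ]
    ring
  set a := γ * κ * r with hadef
  have ha0 : 0 ≤ a := by positivity
  have hκr : κ * M ≤ κ * r := by nlinarith
  have hA : 1 + ‖x - γ • h‖ ^ 2 + 2 * γ * d ≤ 1 + r ^ 2 - a := by
    rw [hexp, hadef]
    nlinarith
  have hA1 : (1:ℝ) ≤ 1 + ‖x - γ • h‖ ^ 2 + 2 * γ * d := by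
    nlinarith [sq_nonneg ‖x - γ • h‖, mul_nonneg hγ.le (le_trans zero_le_one hd1)]
  have har : a ≤ r ^ 2 := by linarith
  clear_value r
  set q := 1 + ‖x - γ • h‖ ^ 2 + 2 * γ * (d:ℝ) with hqdef
  clear_value q
  clear hxh hexp hqdef hrdef x h
  set s := Real.sqrt (1 + r ^ 2) with hsdef
  set sM := Real.sqrt (1 + M ^ 2) with hsMdef
  clear_value a s sM
  have hs2 : s ^ 2 = 1 + r ^ 2 := by rw [hsdef]; exact Real.sq_sqrt (by positivity)
  have hsM2 : sM ^ 2 = 1 + M ^ 2 := by rw [hsMdef]; exact Real.sq_sqrt (by positivity)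
  have hs0 : 0 < s := by rw [hsdef]; exact Real.sqrt_pos.2 (by positivity)
  have hsM0 : 0 < sM := by rw [hsMdef]; exact Real.sqrt_pos.2 (by positivity)
  have hmul : s * (a / (2 * s)) = a / 2 := by field_simp
  have hnn : 0 ≤ s - a / (2 * s) := by
    rw [sub_nonneg, div_le_iff₀ (by positivity : (0:ℝ) < 2 * s)]
    nlinarith
  have key : 1 + r ^ 2 - a ≤ (s - a / (2 * s)) ^ 2 := by
    have hexpand : (s - a / (2 * s)) ^ 2
        = s ^ 2 - 2 * (s * (a / (2 * s))) + (a / (2 * s)) ^ 2 := by ring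
    rw [hexpand, hmul, hs2]
    linarith [sq_nonneg (a / (2 * s))]
  have step1 : Real.sqrt q ≤ s - a / (2 * s) := by
    calc Real.sqrt q
        ≤ Real.sqrt ((s - a / (2 * s)) ^ 2) :=
          Real.sqrt_le_sqrt (le_trans hA key)
      _ = s - a / (2 * s) := Real.sqrt_sq hnn
  have step2 : γ * κ * M / (2 * sM) ≤ a / (2 * s) := by
    rw [div_le_div_iff₀ (by positivity) (by positivity)]
    have h2 : (M * s) ^ 2 ≤ (r * sM) ^ 2 := by nlinarith [hs2, hsM2]
    have hMs : M * s ≤ r * sM := by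
      calc M * s = Real.sqrt ((M * s) ^ 2) := (Real.sqrt_sq (by positivity)).symm
        _ ≤ Real.sqrt ((r * sM) ^ 2) := Real.sqrt_le_sqrt h2
        _ = r * sM := Real.sqrt_sq (by positivity)
    have hγκ : (0:ℝ) ≤ γ * κ := by positivity
    have hfin := mul_le_mul_of_nonneg_left hMs hγκ
    rw [hadef]
    linarith [hfin]
  linarith
end

section
/- Let d ≥ 1, γ > 0, κ > 0, let M ≥ 2d/κ, and let h : ℝ^d → ℝ^d be a measurable map such that ⟨x, h(x)⟩ − (γ/2)‖h(x)‖² ≥ κ‖x‖ for all x with ‖x‖ ≥ M. Set æ = κM/(4(1 + M²)^{1/2}) and V_æ(x) = exp(æ(1 + ‖x‖²)^{1/2}). Then for all x ∈ ℝ^d with ‖x‖ ≥ M, (2π)^{-d/2} ∫_{ℝ^d} V_æ(x − γh(x) + √(2γ)z) e^{-‖z‖²/2} dz ≤ e^{-æ²γ} V_æ(x). -/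
open RealInnerProductSpace

noncomputable section

variable {V : Type*} [NormedAddCommGroup V] [InnerProductSpace ℝ V] [FiniteDimensional ℝ V]
  [MeasurableSpace V] [BorelSpace V]

omit [FiniteDimensional ℝ V] [MeasurableSpace V] [BorelSpace V] in
lemma aux_cast (b c : ℝ) (w v : V) :
    (-(b:ℂ) * (‖v‖:ℂ)^2 + (c:ℂ) * (⟪w,v⟫:ℂ)) = ((-b * ‖v‖^2 + c * ⟪w,v⟫ : ℝ) : ℂ) := by
  push_cast; ring

lemma integrable_rexp_neg_mul_sq_norm_add {b : ℝ} (hb : 0 < b) (c : ℝ) (w : V) :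
    MeasureTheory.Integrable (fun v : V => Real.exp (-b * ‖v‖^2 + c * ⟪w,v⟫)) := by
  have h := (GaussianFourier.integrable_cexp_neg_mul_sq_norm_add
    (b := (b:ℂ)) (by simpa using hb) (c:ℂ) w).norm
  apply h.congr (Filter.Eventually.of_forall fun v => ?_)
  show ‖Complex.exp _‖ = _
  rw [aux_cast, Complex.norm_exp, Complex.ofReal_re]

lemma integral_rexp_neg_mul_sq_norm_add {b : ℝ} (hb : 0 < b) (c : ℝ) (w : V) :
    ∫ v : V, Real.exp (-b * ‖v‖^2 + c * ⟪w,v⟫)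
      = (Real.pi / b) ^ (Module.finrank ℝ V / 2 : ℝ) * Real.exp (c^2 * ‖w‖^2 / (4*b)) := by
  have h := GaussianFourier.integral_cexp_neg_mul_sq_norm_add
    (b := (b:ℂ)) (by simpa using hb) (c:ℂ) w
  rw [← Complex.ofReal_inj]
  have hl : ((∫ v : V, Real.exp (-b * ‖v‖^2 + c * ⟪w,v⟫) : ℝ) : ℂ)
      = ∫ v : V, Complex.exp (-(b:ℂ) * (‖v‖:ℂ)^2 + (c:ℂ) * (⟪w,v⟫:ℂ)) := by
    change Complex.ofRealLI _ = _
    rw [← Complex.ofRealLI.integral_comp_comm]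
    simp only [Function.comp, aux_cast, ← Complex.ofReal_exp]
    rfl
  rw [hl, h, Complex.ofReal_mul, Complex.ofReal_cpow (by positivity), Complex.ofReal_exp]
  push_cast
  ring

end


set_option maxHeartbeats 1000000 in
/-- Outside the ball of radius M, the Euler kernel contracts the
Lyapunov function V_ae(x) = exp(ae(1 + ‖x‖²)^{1/2}) with ae = κM/(4(1 + M²)^{1/2}). -/
theorem euler_kernel_lyapunov_contraction_outside
    (d : ℕ) (hd : 1 ≤ d) (γ κ : ℝ) (hγ : 0 < γ) (hκ : 0 < κ)
    (M : ℝ) (hM : 2 * d / κ ≤ M)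
    (h : EuclideanSpace ℝ (Fin d) → EuclideanSpace ℝ (Fin d))
    (hmeas : Measurable h)
    (hdrift : ∀ x : EuclideanSpace ℝ (Fin d), M ≤ ‖x‖ →
      κ * ‖x‖ ≤ ⟪x, h x⟫ - γ / 2 * ‖h x‖ ^ 2)
    (ae : ℝ) (hae : ae = κ * M / (4 * Real.sqrt (1 + M ^ 2))) :
    ∀ x : EuclideanSpace ℝ (Fin d), M ≤ ‖x‖ →
      (2 * Real.pi) ^ (-(d : ℝ) / 2) *
          ∫ z : EuclideanSpace ℝ (Fin d),
            Real.exp (ae * Real.sqrt (1 + ‖x - γ • h x + Real.sqrt (2 * γ) • z‖ ^ 2)) *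
              Real.exp (-‖z‖ ^ 2 / 2)
        ≤ Real.exp (-ae ^ 2 * γ) * Real.exp (ae * Real.sqrt (1 + ‖x‖ ^ 2)) := by
  intro x hx
  -- basic positivity
  have hd1 : (1:ℝ) ≤ (d:ℝ) := by exact_mod_cast hd
  have hM0 : 0 < M := lt_of_lt_of_le (by positivity) hM
  have hx0 : 0 < ‖x‖ := lt_of_lt_of_le hM0 hx
  have hd2 : 2*(d:ℝ) ≤ κ*M := by rw [div_le_iff₀ hκ] at hM; linarith
  set Q := Real.sqrt (1 + M^2) with hQ
  have hQ2 : Q^2 = 1 + M^2 := Real.sq_sqrt (by positivity)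
  have hQ0 : 0 < Q := Real.sqrt_pos.mpr (by positivity)
  have hae0 : 0 < ae := by rw [hae]; positivity
  have haeκ4 : 4*ae*Q = κ*M := by rw [hae]; field_simp
  set S := Real.sqrt (1 + ‖x‖^2) with hS
  have hS2 : S^2 = 1 + ‖x‖^2 := Real.sq_sqrt (by positivity)
  have hS0 : 0 < S := Real.sqrt_pos.mpr (by positivity)
  have hS1 : 1 ≤ S := by nlinarith
  have hxS : ‖x‖ ≤ S := by nlinarith
  set y := x - γ • h x with hy
  -- drift consequence
  have hy2 : ‖y‖^2 ≤ ‖x‖^2 - 2*γ*(κ*‖x‖) := by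
    have hdx := hdrift x hx
    have hexp : ‖y‖^2 = ‖x‖^2 - 2*(γ*⟪x, h x⟫) + γ^2*‖h x‖^2 := by
      rw [hy, norm_sub_sq_real, real_inner_smul_right, norm_smul]
      simp [Real.norm_eq_abs, abs_of_pos hγ]
      ring
    nlinarith
  have hγ2 : 2*γ*(κ*‖x‖) ≤ ‖x‖^2 := by nlinarith [sq_nonneg ‖y‖]
  -- smallness of 2*ae*γ
  have hMQ : M ≤ Q := by nlinarith
  have hγκ : 2*γ*κ ≤ ‖x‖ := by nlinarith
  set e := S - 2*ae*γ with he
  have h8 : 8*ae*γ*Q ≤ S*Q := by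
    nlinarith [mul_le_mul_of_nonneg_right hγκ hM0.le,
      mul_le_mul_of_nonneg_left hMQ hx0.le,
      mul_le_mul_of_nonneg_right hxS hQ0.le]
  have h2ae : 2*ae*γ ≤ S/4 := by
    have := le_of_mul_le_mul_right (by nlinarith : (8*ae*γ)*Q ≤ S*Q) hQ0
    linarith
  have he0 : 0 < e := by rw [he]; linarith
  have heS : e ≤ S := by rw [he]; nlinarith
  -- monotonicity fact M*S ≤ Q*‖x‖
  have hmono : M*S ≤ Q*‖x‖ := by
    have h2 : (M*S)^2 ≤ (Q*‖x‖)^2 := by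
      nlinarith [mul_self_le_mul_self hM0.le hx]
    have h3 := Real.sqrt_le_sqrt h2
    rwa [Real.sqrt_sq (by positivity), Real.sqrt_sq (by positivity)] at h3
  -- the key scalar inequality
  have h4 : 4*ae*S ≤ κ*‖x‖ := by
    have h5 : 4*ae*S*Q = κ*M*S := by rw [← haeκ4]; ring
    have h6 : κ*(M*S) ≤ κ*(Q*‖x‖) := mul_le_mul_of_nonneg_left hmono hκ.le
    have h7 : (4*ae*S)*Q ≤ (κ*‖x‖)*Q := by nlinarith
    exact le_of_mul_le_mul_right h7 hQ0
  have keyS : (d:ℝ)*S + ae*(2*‖x‖^2+1) ≤ κ*‖x‖*S := by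
    nlinarith [mul_nonneg (by linarith : (0:ℝ) ≤ κ*M - 2*(d:ℝ)) hS0.le,
      mul_nonneg (sub_nonneg.mpr h4) hS0.le,
      mul_nonneg hae0.le (mul_nonneg (sub_nonneg.mpr hxS) (by positivity : (0:ℝ) ≤ S + ‖x‖)),
      mul_nonneg (mul_nonneg hκ.le (sub_nonneg.mpr hx)) hS0.le]
  have key2 : (d:ℝ)*S + ae*‖y‖^2 + ae*S*e ≤ κ*‖x‖*e := by
    have h9 := mul_le_mul_of_nonneg_left hy2 hae0.le
    have haeS2 : ae*S^2 = ae*(1+‖x‖^2) := by rw [hS2]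
    have h10 : (0:ℝ) ≤ ae^2*γ*S := by positivity
    rw [he]
    nlinarith [h9, keyS, haeS2, h10]
  have FIN : (d:ℝ)*ae*γ/e + ae^2*γ*‖y‖^2/(S*e) + ae^2*γ ≤ ae*γ*(κ*‖x‖)/S := by
    rw [← sub_nonneg]
    have hrw : ae*γ*(κ*‖x‖)/S - ((d:ℝ)*ae*γ/e + ae^2*γ*‖y‖^2/(S*e) + ae^2*γ)
        = ae*γ*((κ*‖x‖*e) - ((d:ℝ)*S + ae*‖y‖^2 + ae*S*e))/(S*e) := by
      field_simp
    rw [hrw]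
    have : 0 ≤ (κ*‖x‖*e) - ((d:ℝ)*S + ae*‖y‖^2 + ae*S*e) := by linarith
    positivity
  -- integral part
  have hb' : 0 < e/(2*S) := by positivity
  have hsq2γ : Real.sqrt (2*γ)^2 = 2*γ := Real.sq_sqrt (by positivity)
  set K := Real.exp (ae*S - ae*γ*(κ*‖x‖)/S) with hK
  have hpt : ∀ z : EuclideanSpace ℝ (Fin d),
      Real.exp (ae * Real.sqrt (1 + ‖y + Real.sqrt (2*γ) • z‖^2)) * Real.exp (-‖z‖^2/2)
        ≤ K * Real.exp (-(e/(2*S)) * ‖z‖^2 + ae*Real.sqrt (2*γ)/S * ⟪y,z⟫) := by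
    intro z
    have hu2 : ‖y + Real.sqrt (2*γ) • z‖^2
        = ‖y‖^2 + 2*(Real.sqrt (2*γ) * ⟪y,z⟫) + 2*γ*‖z‖^2 := by
      rw [norm_add_sq_real, real_inner_smul_right, norm_smul, Real.norm_eq_abs,
        abs_of_nonneg (Real.sqrt_nonneg _), mul_pow, hsq2γ]
    set T := -(2*γ*(κ*‖x‖)) + 2*(Real.sqrt (2*γ) * ⟪y,z⟫) + 2*γ*‖z‖^2 with hT
    have hAT : 1 + ‖y + Real.sqrt (2*γ) • z‖^2 ≤ S^2 + T := by
      rw [hu2, hT]; linarith [hy2, hS2.le, hS2.ge]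
    have hTlb : -S^2 ≤ T := by
      have h0' : (0:ℝ) ≤ 1 + ‖y + Real.sqrt (2*γ) • z‖^2 := by positivity
      linarith
    have hr0 : 0 ≤ S + T/(2*S) := by
      have h1 : -S^2/(2*S) ≤ T/(2*S) := by
        exact (div_le_div_iff_of_pos_right (by positivity : (0:ℝ) < 2*S)).mpr hTlb
      have h2 : -S^2/(2*S) = -(S/2) := by field_simp
      linarith [h1, h2.le, h2.ge]
    have hsqle : Real.sqrt (1 + ‖y + Real.sqrt (2*γ) • z‖^2) ≤ S + T/(2*S) := by
      have h1 := Real.sqrt_le_sqrt hAT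
      have hexpand : (S + T/(2*S))^2 = S^2 + T + (T/(2*S))^2 := by field_simp; ring
      have h3 : S^2 + T ≤ (S + T/(2*S))^2 := by linarith [hexpand.ge, sq_nonneg (T/(2*S))]
      have h4 := Real.sqrt_le_sqrt h3
      rw [Real.sqrt_sq hr0] at h4
      linarith
    rw [hK, ← Real.exp_add, ← Real.exp_add]
    apply Real.exp_le_exp.mpr
    have heq : ae*(S + T/(2*S)) + (-‖z‖^2/2)
        = (ae*S - ae*γ*(κ*‖x‖)/S)
          + (-(e/(2*S)) * ‖z‖^2 + ae*Real.sqrt (2*γ)/S * ⟪y,z⟫) := by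
      rw [hT, he]; field_simp; ring
    have h5 := mul_le_mul_of_nonneg_left hsqle hae0.le
    linarith [heq.le, heq.ge]
  have hInt : MeasureTheory.Integrable (fun z : EuclideanSpace ℝ (Fin d) =>
      K * Real.exp (-(e/(2*S)) * ‖z‖^2 + ae*Real.sqrt (2*γ)/S * ⟪y,z⟫)) :=
    (integrable_rexp_neg_mul_sq_norm_add hb' _ y).const_mul K
  have hmono_int : (∫ z : EuclideanSpace ℝ (Fin d),
        Real.exp (ae * Real.sqrt (1 + ‖y + Real.sqrt (2*γ) • z‖^2)) * Real.exp (-‖z‖^2/2))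
      ≤ ∫ z : EuclideanSpace ℝ (Fin d),
        K * Real.exp (-(e/(2*S)) * ‖z‖^2 + ae*Real.sqrt (2*γ)/S * ⟪y,z⟫) :=
    MeasureTheory.integral_mono_of_nonneg
      (Filter.Eventually.of_forall fun z => by positivity) hInt
      (Filter.Eventually.of_forall hpt)
  have hval : (∫ z : EuclideanSpace ℝ (Fin d),
        K * Real.exp (-(e/(2*S)) * ‖z‖^2 + ae*Real.sqrt (2*γ)/S * ⟪y,z⟫))
      = K * ((Real.pi/(e/(2*S)))^((d:ℝ)/2)
          * Real.exp ((ae*Real.sqrt (2*γ)/S)^2 * ‖y‖^2 / (4*(e/(2*S))))) := by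
    rw [MeasureTheory.integral_const_mul, integral_rexp_neg_mul_sq_norm_add hb' _ y,
      finrank_euclideanSpace_fin]
  have hpow : (2*Real.pi)^(-(d:ℝ)/2) * (Real.pi/(e/(2*S)))^((d:ℝ)/2) = (S/e)^((d:ℝ)/2) := by
    have h2π : (0:ℝ) < 2*Real.pi := by positivity
    have e1 : Real.pi/(e/(2*S)) = (2*Real.pi)*(S/e) := by field_simp
    have e2 : ((2*Real.pi)*(S/e))^((d:ℝ)/2) = (2*Real.pi)^((d:ℝ)/2) * (S/e)^((d:ℝ)/2) :=
      Real.mul_rpow h2π.le (by positivity)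
    have e3 : (2*Real.pi)^(-(d:ℝ)/2) = ((2*Real.pi)^((d:ℝ)/2))⁻¹ := by
      rw [neg_div, Real.rpow_neg h2π.le]
    rw [e1, e2, e3, ← mul_assoc, inv_mul_cancel₀ (Real.rpow_pos_of_pos h2π _).ne', one_mul]
  have hWarg : (ae*Real.sqrt (2*γ)/S)^2 * ‖y‖^2 / (4*(e/(2*S))) = ae^2*γ*‖y‖^2/(S*e) := by
    rw [div_pow, mul_pow, hsq2γ]; field_simp; ring
  have hSe : (S/e)^((d:ℝ)/2) = Real.exp (Real.log (S/e) * ((d:ℝ)/2)) :=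
    Real.rpow_def_of_pos (by positivity) _
  have hlog : Real.log (S/e) ≤ 2*ae*γ/e := by
    have h1 := Real.log_le_sub_one_of_pos (show (0:ℝ) < S/e by positivity)
    have h2 : S/e - 1 = 2*ae*γ/e := by
      rw [div_sub_one he0.ne', show S - e = 2*ae*γ by rw [he]; ring]
    linarith
  calc (2*Real.pi)^(-(d:ℝ)/2) * ∫ z : EuclideanSpace ℝ (Fin d),
        Real.exp (ae * Real.sqrt (1 + ‖y + Real.sqrt (2*γ) • z‖^2)) * Real.exp (-‖z‖^2/2)
      ≤ (2*Real.pi)^(-(d:ℝ)/2) * (K * ((Real.pi/(e/(2*S)))^((d:ℝ)/2)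
          * Real.exp ((ae*Real.sqrt (2*γ)/S)^2 * ‖y‖^2 / (4*(e/(2*S)))))) := by
        apply mul_le_mul_of_nonneg_left _ (by positivity)
        rw [← hval]; exact hmono_int
    _ = Real.exp (Real.log (S/e) * ((d:ℝ)/2) + (ae*S - ae*γ*(κ*‖x‖)/S)
          + ae^2*γ*‖y‖^2/(S*e)) := by
        rw [hWarg, show (2*Real.pi)^(-(d:ℝ)/2) * (K * ((Real.pi/(e/(2*S)))^((d:ℝ)/2)
            * Real.exp (ae^2*γ*‖y‖^2/(S*e))))
          = ((2*Real.pi)^(-(d:ℝ)/2) * (Real.pi/(e/(2*S)))^((d:ℝ)/2))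
            * (K * Real.exp (ae^2*γ*‖y‖^2/(S*e))) by ring,
          hpow, hSe, hK, ← Real.exp_add, ← Real.exp_add]
        congr 1
        ring
    _ ≤ Real.exp (-ae^2*γ + ae*S) := by
        apply Real.exp_le_exp.mpr
        have hlog2 : Real.log (S/e) * ((d:ℝ)/2) ≤ (d:ℝ)*ae*γ/e := by
          have h12 := mul_le_mul_of_nonneg_right hlog (by positivity : (0:ℝ) ≤ (d:ℝ)/2)
          calc Real.log (S/e) * ((d:ℝ)/2) ≤ 2*ae*γ/e*((d:ℝ)/2) := h12
            _ = (d:ℝ)*ae*γ/e := by ring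
        linarith only [FIN, hlog2]
    _ = Real.exp (-ae^2*γ) * Real.exp (ae*S) := Real.exp_add _ _
end

section
/- Let d ≥ 1, γ > 0, a > 0, M ≥ 0, K ≥ 0, and let h : ℝ^d → ℝ^d be a measurable map with ‖h(x)‖ ≤ K for all x with ‖x‖ ≤ M. Then for all x ∈ ℝ^d with ‖x‖ ≤ M, (2π)^{-d/2} ∫_{ℝ^d} V_a(x − γh(x) + √(2γ)z) e^{-‖z‖²/2} dz ≤ e^{γc} V_a(x), where V_a(x) = exp(a(1 + ‖x‖²)^{1/2}) and c = a² + a(MK + γK²/2 + d). -/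
open MeasureTheory Real

private lemma alg_id' (γ a S b p q n : ℝ) (hS : S ≠ 0) (hc : S + 2*γ*a ≠ 0) :
    a/(2*(S+2*γ*a))*(1 + (n + 2*(b*q) + 2*γ*p)) + a*(S+2*γ*a)/2 + -p/2
      = a*(S+2*γ*a)/2 + a/(2*(S+2*γ*a)) + a/(2*(S+2*γ*a))*n
          + S/(2*(S+2*γ*a))*(2*γ*a^2/S^2*n)
        + -(S/(2*(S+2*γ*a))) * (p - 2*(a*b/S*q) + 2*γ*a^2/S^2*n) := by
  have key : (S+2*γ*a) * (S+2*γ*a)⁻¹ = 1 := mul_inv_cancel₀ hc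
  field_simp
  linear_combination (S*p) * key

private lemma alg_K0' (γ a S : ℝ) (hS : S ≠ 0) (hc : S + 2*γ*a ≠ 0) :
    a*(S+2*γ*a)/2 + a/(2*(S+2*γ*a)) + a/(2*(S+2*γ*a))*(S^2-1)
        + S/(2*(S+2*γ*a))*(2*γ*a^2/S^2*(S^2-1))
      = a*S + γ*a^2 - γ*a^2/(S*(S+2*γ*a)) := by
  have key : (S+2*γ*a) * (S+2*γ*a)⁻¹ = 1 := mul_inv_cancel₀ hc
  field_simp
  linear_combination (2*a*S^2+2*a^2*S*γ) * key

private lemma gauss_integrable' (α : ℝ) (hα : 0 < α) (d : ℕ) :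
    Integrable (fun v : EuclideanSpace ℝ (Fin d) ↦ rexp (-α * ‖v‖^2)) := by
  have hC := GaussianFourier.integrable_cexp_neg_mul_sq_norm_add
    (V := EuclideanSpace ℝ (Fin d)) (b := (α:ℂ)) (by simpa using hα) 0 0
  simp only [zero_mul, add_zero] at hC
  have := hC.re
  refine this.congr (Filter.Eventually.of_forall fun v ↦ ?_)
  have : -(α:ℂ) * (‖v‖:ℂ)^2 = ((-α * ‖v‖^2 : ℝ) : ℂ) := by push_cast; ring
  simp only [this, ← Complex.ofReal_exp]
  exact RCLike.ofReal_re _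

private lemma gauss_integral' (α : ℝ) (hα : 0 < α) (d : ℕ) :
    ∫ v : EuclideanSpace ℝ (Fin d), rexp (-α * ‖v‖^2) = (π/α) ^ ((d:ℝ)/2) := by
  rw [GaussianFourier.integral_rexp_neg_mul_sq_norm hα, finrank_euclideanSpace_fin]

set_option maxHeartbeats 1600000 in
/-- On the ball of radius M where the drift is bounded by K, the
Euler kernel satisfies R_γ V_a(x) ≤ e^{γc} V_a(x) with
c = a² + a(MK + γK²/2 + d). -/
theorem euler_kernel_lyapunov_bound_inside
    (d : ℕ) (hd : 1 ≤ d) (γ a M K : ℝ) (hγ : 0 < γ) (ha : 0 < a)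
    (hM : 0 ≤ M) (hK : 0 ≤ K)
    (h : EuclideanSpace ℝ (Fin d) → EuclideanSpace ℝ (Fin d))
    (hmeas : Measurable h)
    (hbound : ∀ x : EuclideanSpace ℝ (Fin d), ‖x‖ ≤ M → ‖h x‖ ≤ K) :
    ∀ x : EuclideanSpace ℝ (Fin d), ‖x‖ ≤ M →
      (2 * Real.pi) ^ (-(d : ℝ) / 2) *
          ∫ z : EuclideanSpace ℝ (Fin d),
            Real.exp (a * Real.sqrt (1 + ‖x - γ • h x + Real.sqrt (2 * γ) • z‖ ^ 2)) *
              Real.exp (-‖z‖ ^ 2 / 2)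
        ≤ Real.exp (γ * (a ^ 2 + a * (M * K + γ * K ^ 2 / 2 + d))) *
            Real.exp (a * Real.sqrt (1 + ‖x‖ ^ 2)) := by
  intro x hx
  have hπ : (0:ℝ) < π := Real.pi_pos
  set y : EuclideanSpace ℝ (Fin d) := x - γ • h x with hy
  set b : ℝ := Real.sqrt (2*γ) with hbdef
  have hb0 : 0 ≤ b := Real.sqrt_nonneg _
  have hb2 : b^2 = 2*γ := Real.sq_sqrt (by positivity)
  set S : ℝ := Real.sqrt (1 + ‖y‖^2) with hSdef
  have hS2 : S^2 = 1 + ‖y‖^2 := Real.sq_sqrt (by positivity)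
  have hS1 : 1 ≤ S := by
    have h2 := Real.sqrt_le_sqrt (show (1:ℝ) ≤ 1 + ‖y‖^2 by linarith [sq_nonneg ‖y‖])
    rwa [Real.sqrt_one] at h2
  have hS0 : 0 < S := lt_of_lt_of_le one_pos hS1
  set c : ℝ := S + 2*γ*a with hcdef
  have hc0 : 0 < c := by
    have h2 : (0:ℝ) < 2*γ*a := by positivity
    rw [hcdef]; linarith
  set t : ℝ := a/(2*c) with htdef
  set α : ℝ := S/(2*c) with hαdef
  have hα0 : 0 < α := div_pos hS0 (by linarith)
  set v₀ : EuclideanSpace ℝ (Fin d) := (a*b/S) • y with hv₀def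
  have hbb : (a*b/S)^2 = 2*γ*a^2/S^2 := by rw [div_pow, mul_pow, hb2]; ring
  set K0 : ℝ := a*c/2 + t + t*‖y‖^2 + α*((a*b/S)^2*‖y‖^2) with hK0def
  -- pointwise bound
  have hpoint : ∀ z : EuclideanSpace ℝ (Fin d),
      Real.exp (a * Real.sqrt (1 + ‖y + b • z‖ ^ 2)) * Real.exp (-‖z‖ ^ 2 / 2)
        ≤ rexp K0 * rexp (-α * ‖z - v₀‖^2) := by
    intro z
    rw [← Real.exp_add, ← Real.exp_add]
    apply Real.exp_le_exp.mpr
    set u : ℝ := 1 + ‖y + b • z‖ ^ 2 with hudef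
    have hu0 : 0 ≤ u := by positivity
    have hsq : a * Real.sqrt u ≤ t*u + a*c/2 := by
      have h2 : 2*c*Real.sqrt u ≤ u + c^2 := by
        have e := sq_nonneg (Real.sqrt u - c)
        rw [sub_sq, Real.sq_sqrt hu0] at e
        linarith
      calc a * Real.sqrt u = (a/(2*c))*(2*c*Real.sqrt u) := by
            field_simp
        _ ≤ (a/(2*c))*(u + c^2) := mul_le_mul_of_nonneg_left h2 (by positivity)
        _ = t*u + a*c/2 := by
            rw [htdef]
            field_simp
    have hu : u = 1 + (‖y‖^2 + 2*(b*(inner ℝ y z : ℝ)) + 2*γ*‖z‖^2) := by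
      rw [hudef, norm_add_sq_real, real_inner_smul_right, norm_smul,
        Real.norm_eq_abs, mul_pow, sq_abs, hb2]
    have hv : ‖z - v₀‖^2 = ‖z‖^2 - 2*(a*b/S*(inner ℝ y z : ℝ)) + 2*γ*a^2/S^2*‖y‖^2 := by
      rw [hv₀def, norm_sub_sq_real, real_inner_smul_right, real_inner_comm, norm_smul,
        Real.norm_eq_abs, mul_pow, sq_abs, hbb]
    have hid : t*u + a*c/2 + -‖z‖^2/2 = K0 + -α * ‖z-v₀‖^2 := by
      rw [hu, hv, hK0def, htdef, hαdef, hbb, hcdef]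
      exact alg_id' γ a S b (‖z‖^2) ((inner ℝ y z : ℝ)) (‖y‖^2) hS0.ne' hc0.ne'
    linarith
  -- integrability of the dominating function
  have hg_int : Integrable (fun z : EuclideanSpace ℝ (Fin d) ↦
      rexp K0 * rexp (-α * ‖z - v₀‖^2)) :=
    ((gauss_integrable' α hα0 d).comp_sub_right v₀).const_mul _
  have hIle : (∫ z : EuclideanSpace ℝ (Fin d),
        Real.exp (a * Real.sqrt (1 + ‖y + b • z‖ ^ 2)) * Real.exp (-‖z‖ ^ 2 / 2))
      ≤ ∫ z : EuclideanSpace ℝ (Fin d), rexp K0 * rexp (-α * ‖z - v₀‖^2) :=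
    integral_mono_of_nonneg (Filter.Eventually.of_forall fun z ↦ by positivity)
      hg_int (Filter.Eventually.of_forall hpoint)
  have hgval : (∫ z : EuclideanSpace ℝ (Fin d), rexp K0 * rexp (-α * ‖z - v₀‖^2))
      = rexp K0 * (π/α) ^ ((d:ℝ)/2) := by
    rw [integral_const_mul]
    congr 1
    rw [integral_sub_right_eq_self (fun v : EuclideanSpace ℝ (Fin d) ↦ rexp (-α * ‖v‖^2)) v₀]
    exact gauss_integral' α hα0 d
  -- power identity and bound
  have hr0 : (0:ℝ) ≤ (d:ℝ)/2 := by positivity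
  have e1 : (2*π) ^ (-(d:ℝ)/2) * (π/α) ^ ((d:ℝ)/2) = (c/S) ^ ((d:ℝ)/2) := by
    rw [show -(d:ℝ)/2 = -((d:ℝ)/2) by ring, Real.rpow_neg (by positivity),
      inv_mul_eq_div, ← Real.div_rpow (by positivity) (by positivity)]
    congr 1
    rw [hαdef]
    field_simp
  have e2 : (c/S) ^ ((d:ℝ)/2) ≤ rexp (γ*a*d) := by
    have h1 : c/S ≤ rexp (2*γ*a) := by
      have h2 : c/S ≤ 1 + 2*γ*a := by
        rw [div_le_iff₀ hS0, hcdef]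
        have h3 : 2*γ*a*1 ≤ 2*γ*a*S := by
          have : (0:ℝ) ≤ 2*γ*a := by positivity
          exact mul_le_mul_of_nonneg_left hS1 this
        nlinarith [h3]
      linarith [Real.add_one_le_exp (2*γ*a)]
    calc (c/S) ^ ((d:ℝ)/2) ≤ (rexp (2*γ*a)) ^ ((d:ℝ)/2) :=
          Real.rpow_le_rpow (by positivity) h1 hr0
      _ = rexp (2*γ*a*((d:ℝ)/2)) := (Real.exp_mul _ _).symm
      _ = rexp (γ*a*d) := by congr 1; ring
  -- bound on K0
  have hyS : ‖y‖^2 = S^2 - 1 := by linarith [hS2]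
  have hK0eq : K0 = a*S + γ*a^2 - γ*a^2/(S*c) := by
    rw [hK0def, htdef, hαdef, hbb, hyS, hcdef]
    exact alg_K0' γ a S hS0.ne' hc0.ne'
  have hK0le : K0 ≤ a*S + γ*a^2 := by
    rw [hK0eq]
    have : 0 ≤ γ*a^2/(S*c) := by positivity
    linarith
  -- bound on S
  have hSle : S ≤ Real.sqrt (1+‖x‖^2) + γ*(M*K + γ*K^2/2) := by
    have hyn : ‖y‖ ≤ ‖x‖ + γ*K := by
      calc ‖y‖ ≤ ‖x‖ + ‖γ • h x‖ := by rw [hy]; exact norm_sub_le _ _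
        _ = ‖x‖ + γ*‖h x‖ := by rw [norm_smul, Real.norm_eq_abs, abs_of_pos hγ]
        _ ≤ ‖x‖ + γ*K := by
            have := mul_le_mul_of_nonneg_left (hbound x hx) hγ.le
            linarith
    have hx0 : (0:ℝ) ≤ ‖x‖ := norm_nonneg x
    have hy0 : (0:ℝ) ≤ ‖y‖ := norm_nonneg y
    have hA2 : (Real.sqrt (1+‖x‖^2))^2 = 1+‖x‖^2 := Real.sq_sqrt (by positivity)
    have hA1 : 1 ≤ Real.sqrt (1+‖x‖^2) := by
      have h2 := Real.sqrt_le_sqrt (show (1:ℝ) ≤ 1 + ‖x‖^2 by linarith [sq_nonneg ‖x‖])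
      rwa [Real.sqrt_one] at h2
    have hE0 : 0 ≤ γ*(M*K + γ*K^2/2) := by positivity
    have h1 : 1 + ‖y‖^2 ≤ (Real.sqrt (1+‖x‖^2) + γ*(M*K + γ*K^2/2))^2 := by
      have hy2 : ‖y‖^2 ≤ (‖x‖ + γ*K)^2 := pow_le_pow_left₀ hy0 hyn 2
      have hexp1 : (‖x‖ + γ*K)^2 = ‖x‖^2 + 2*γ*K*‖x‖ + γ^2*K^2 := by ring
      have h4 : 2*γ*K*‖x‖ ≤ 2*γ*K*M :=
        mul_le_mul_of_nonneg_left hx (by positivity : (0:ℝ) ≤ 2*γ*K)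
      have hexp2 : (Real.sqrt (1+‖x‖^2) + γ*(M*K + γ*K^2/2))^2
          = (Real.sqrt (1+‖x‖^2))^2
            + 2*(Real.sqrt (1+‖x‖^2)*(γ*(M*K + γ*K^2/2)))
            + (γ*(M*K + γ*K^2/2))^2 := by ring
      have h5 : 1*(γ*(M*K + γ*K^2/2)) ≤ Real.sqrt (1+‖x‖^2)*(γ*(M*K + γ*K^2/2)) :=
        mul_le_mul_of_nonneg_right hA1 hE0
      have h6 : 0 ≤ (γ*(M*K + γ*K^2/2))^2 := sq_nonneg _
      linarith
    calc S ≤ Real.sqrt ((Real.sqrt (1+‖x‖^2) + γ*(M*K + γ*K^2/2))^2) := by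
          rw [hSdef]; exact Real.sqrt_le_sqrt h1
      _ = Real.sqrt (1+‖x‖^2) + γ*(M*K + γ*K^2/2) := Real.sqrt_sq (by positivity)
  -- final assembly
  clear_value y b S c t α v₀ K0
  have hfin : rexp K0 * rexp (γ*a*d)
      ≤ Real.exp (γ * (a ^ 2 + a * (M * K + γ * K ^ 2 / 2 + d))) *
          Real.exp (a * Real.sqrt (1 + ‖x‖ ^ 2)) := by
    rw [← Real.exp_add, ← Real.exp_add]
    apply Real.exp_le_exp.mpr
    have haS : a*S ≤ a*(Real.sqrt (1+‖x‖^2) + γ*(M*K + γ*K^2/2)) :=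
      mul_le_mul_of_nonneg_left hSle ha.le
    linarith [hK0le, haS]
  calc (2 * π) ^ (-(d:ℝ)/2) *
        ∫ z : EuclideanSpace ℝ (Fin d),
          Real.exp (a * Real.sqrt (1 + ‖y + b • z‖ ^ 2)) * Real.exp (-‖z‖ ^ 2 / 2)
      ≤ (2 * π) ^ (-(d:ℝ)/2) * (rexp K0 * (π/α) ^ ((d:ℝ)/2)) := by
        apply mul_le_mul_of_nonneg_left _ (Real.rpow_nonneg (by positivity) _)
        rw [← hgval]; exact hIle
    _ = rexp K0 * ((2*π) ^ (-(d:ℝ)/2) * (π/α) ^ ((d:ℝ)/2)) := by ring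
    _ = rexp K0 * (c/S) ^ ((d:ℝ)/2) := by rw [e1]
    _ ≤ rexp K0 * rexp (γ*a*d) := mul_le_mul_of_nonneg_left e2 (Real.exp_nonneg _)
    _ ≤ _ := hfin
end

section
/- Let (E, ℰ) be a measurable space, R a Markov kernel on E, V : E → [1, ∞) measurable, and let a > 0, γ > 0, b ≥ 0 be such that for all x ∈ E, ∫ V(y) R(x, dy) ≤ e^{-a²γ} V(x) + γb. Then for all n ∈ ℕ and all x ∈ E, ∫ V(y) R^n(x, dy) ≤ e^{-a²nγ} V(x) + (b/a²) e^{a²γ}, where R^n denotes the n-fold composition of the kernel R (with R^0(x,·) the Dirac mass at x) and integrals are upper (Lebesgue) integrals. -/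
open MeasureTheory ProbabilityTheory ENNReal

/-- The n-fold composition of a Markov kernel with itself, with `R^0 = id`
(the Dirac/deterministic identity kernel). -/
noncomputable def kernelIterate {E : Type*} [MeasurableSpace E]
    (R : ProbabilityTheory.Kernel E E) : ℕ → ProbabilityTheory.Kernel E E
  | 0 => ProbabilityTheory.Kernel.id
  | n + 1 => (kernelIterate R n) ∘ₖ R

lemma kernelIterate_drift_aux
    {E : Type*} [MeasurableSpace E] (R : ProbabilityTheory.Kernel E E)
    [ProbabilityTheory.IsMarkovKernel R]
    (V : E → ℝ≥0∞) (hVmeas : Measurable V)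
    (q c : ℝ) (hq : 0 ≤ q) (hc : 0 ≤ c)
    (hdrift : ∀ x, ∫⁻ y, V y ∂(R x)
      ≤ ENNReal.ofReal q * V x + ENNReal.ofReal c) :
    ∀ (n : ℕ) (x : E), ∫⁻ y, V y ∂(kernelIterate R n x)
      ≤ ENNReal.ofReal (q ^ n) * V x
          + ENNReal.ofReal (c * ∑ k ∈ Finset.range n, q ^ k) := by
  intro n
  induction n with
  | zero =>
    intro x
    simp [kernelIterate, Kernel.id, Kernel.deterministic_apply,
      lintegral_dirac' _ hVmeas]
  | succ n ih =>
    intro x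
    rw [show kernelIterate R (n + 1) = (kernelIterate R n) ∘ₖ R from rfl,
      Kernel.lintegral_comp _ _ _ hVmeas]
    calc ∫⁻ y, ∫⁻ z, V z ∂(kernelIterate R n y) ∂(R x)
        ≤ ∫⁻ y, (ENNReal.ofReal (q ^ n) * V y
            + ENNReal.ofReal (c * ∑ k ∈ Finset.range n, q ^ k)) ∂(R x) :=
          lintegral_mono ih
      _ = ENNReal.ofReal (q ^ n) * ∫⁻ y, V y ∂(R x)
            + ENNReal.ofReal (c * ∑ k ∈ Finset.range n, q ^ k) := by
          rw [lintegral_add_right _ measurable_const, lintegral_const_mul _ hVmeas,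
            lintegral_const]
          simp
      _ ≤ ENNReal.ofReal (q ^ n) * (ENNReal.ofReal q * V x + ENNReal.ofReal c)
            + ENNReal.ofReal (c * ∑ k ∈ Finset.range n, q ^ k) := by
          gcongr
          exact hdrift x
      _ = ENNReal.ofReal (q ^ (n + 1)) * V x
            + ENNReal.ofReal (c * ∑ k ∈ Finset.range (n + 1), q ^ k) := by
          have e1 : ENNReal.ofReal (q ^ (n + 1))
              = ENNReal.ofReal (q ^ n) * ENNReal.ofReal q := by
            rw [← ENNReal.ofReal_mul (by positivity), pow_succ]
          have e2 : ENNReal.ofReal (c * ∑ k ∈ Finset.range (n + 1), q ^ k)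
              = ENNReal.ofReal (q ^ n) * ENNReal.ofReal c
                + ENNReal.ofReal (c * ∑ k ∈ Finset.range n, q ^ k) := by
            rw [← ENNReal.ofReal_mul (by positivity),
              ← ENNReal.ofReal_add (by positivity) (by positivity),
              Finset.sum_range_succ]
            congr 1
            ring
          rw [e1, e2]
          ring

/-- If a Markov kernel R satisfies the one-step drift condition
∫ V dR(x,·) ≤ e^{-a²γ} V(x) + γb for a measurable V ≥ 1, then for all n,
∫ V dR^n(x,·) ≤ e^{-a²nγ} V(x) + (b/a²)e^{a²γ}. -/
theorem markov_kernel_iterated_drift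
    {E : Type*} [MeasurableSpace E] (R : ProbabilityTheory.Kernel E E)
    [ProbabilityTheory.IsMarkovKernel R]
    (V : E → ℝ≥0∞) (hVmeas : Measurable V) (hV1 : ∀ x, 1 ≤ V x)
    (a γ b : ℝ) (ha : 0 < a) (hγ : 0 < γ) (hb : 0 ≤ b)
    (hdrift : ∀ x, ∫⁻ y, V y ∂(R x)
      ≤ ENNReal.ofReal (Real.exp (-a ^ 2 * γ)) * V x + ENNReal.ofReal (γ * b)) :
    ∀ (n : ℕ) (x : E), ∫⁻ y, V y ∂(kernelIterate R n x)
      ≤ ENNReal.ofReal (Real.exp (-a ^ 2 * (n * γ))) * V x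
          + ENNReal.ofReal (b / a ^ 2 * Real.exp (a ^ 2 * γ)) := by
  intro n x
  have hq : (0:ℝ) ≤ Real.exp (-a ^ 2 * γ) := (Real.exp_pos _).le
  have hc : (0:ℝ) ≤ γ * b := by positivity
  have key := kernelIterate_drift_aux R V hVmeas _ _ hq hc hdrift n x
  have hqn : Real.exp (-a ^ 2 * γ) ^ n = Real.exp (-a ^ 2 * (n * γ)) := by
    rw [← Real.exp_nat_mul]; ring_nf
  rw [hqn] at key
  refine key.trans (add_le_add (le_refl _) (ENNReal.ofReal_le_ofReal ?_))
  -- bound the geometric sum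
  set s : ℝ := a ^ 2 * γ with hs
  have hspos : 0 < s := by positivity
  have hqlt : Real.exp (-s) < 1 := by
    rw [Real.exp_lt_one_iff]; linarith
  have hden : 0 < 1 - Real.exp (-s) := by linarith
  have hq' : Real.exp (-a ^ 2 * γ) = Real.exp (-s) := by rw [hs]; ring_nf
  have hsum : ∑ k ∈ Finset.range n, Real.exp (-a ^ 2 * γ) ^ k
      ≤ 1 / (1 - Real.exp (-s)) := by
    rw [hq', geom_sum_eq hqlt.ne]
    have heq : (Real.exp (-s) ^ n - 1) / (Real.exp (-s) - 1)
        = (1 - Real.exp (-s) ^ n) / (1 - Real.exp (-s)) := by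
      rw [← neg_div_neg_eq]; ring_nf
    rw [heq]
    gcongr
    linarith [pow_nonneg (Real.exp_pos (-s)).le n]
  have h1 : s * Real.exp (-s) ≤ 1 - Real.exp (-s) := by
    have h := Real.add_one_le_exp s
    have hm : Real.exp s * Real.exp (-s) = 1 := by rw [← Real.exp_add]; simp
    nlinarith [Real.exp_pos (-s), Real.exp_pos s]
  have hm : Real.exp s * Real.exp (-s) = 1 := by rw [← Real.exp_add]; simp
  have h2 : b / a ^ 2 * Real.exp s * (s * Real.exp (-s)) = γ * b := by
    calc b / a ^ 2 * Real.exp s * (s * Real.exp (-s))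
        = b / a ^ 2 * s * (Real.exp s * Real.exp (-s)) := by ring
      _ = b / a ^ 2 * s := by rw [hm, mul_one]
      _ = γ * b := by rw [hs]; field_simp
  have step : γ * b ≤ b / a ^ 2 * Real.exp s * (1 - Real.exp (-s)) := by
    calc γ * b = b / a ^ 2 * Real.exp s * (s * Real.exp (-s)) := h2.symm
      _ ≤ b / a ^ 2 * Real.exp s * (1 - Real.exp (-s)) := by
          apply mul_le_mul_of_nonneg_left h1
          positivity
  calc γ * b * ∑ k ∈ Finset.range n, Real.exp (-a ^ 2 * γ) ^ k
      ≤ γ * b * (1 / (1 - Real.exp (-s))) := mul_le_mul_of_nonneg_left hsum hc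
    _ = γ * b / (1 - Real.exp (-s)) := by ring
    _ ≤ b / a ^ 2 * Real.exp s := by rw [div_le_iff₀ hden]; exact step
end

section
/- Let d ≥ 1 and let U : ℝ^d → ℝ be continuously differentiable with ∇U(0) = 0, satisfying: (i) Assumption A1 (there exist ℓ, L ≥ 0 with ‖∇U(x) − ∇U(y)‖ ≤ L(1 + ‖x‖^ℓ + ‖y‖^ℓ)‖x − y‖ for all x, y); (ii) ‖∇U(x)‖ → ∞ as ‖x‖ → ∞; (iii) there exist κ > 0 and M₁ ≥ 0 such that ⟨x, ∇U(x)⟩ ≥ κ‖x‖‖∇U(x)‖ whenever ‖x‖ ≥ M₁. Fix a > 0 and set V_a(x) = exp(a(1 + ‖x‖²)^{1/2}) and 𝒜V_a(x) = a V_a(x)[ −⟨∇U(x), x⟩(1 + ‖x‖²)^{-1/2} + a‖x‖²/(1 + ‖x‖²) + d(1 + ‖x‖²)^{-1/2} − ‖x‖²(1 + ‖x‖²)^{-3/2} ]. Then there exists b ≥ 0 such that for all x ∈ ℝ^d, 𝒜V_a(x) ≤ −a V_a(x) + a b. -/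
set_option maxHeartbeats 800000

open RealInnerProductSpace

/-- Foster–Lyapunov drift condition for the Langevin generator
applied to V_a(x) = exp(a(1 + ‖x‖²)^{1/2}): there exists b ≥ 0 such that
𝒜V_a(x) ≤ −a V_a(x) + ab, where 𝒜V_a is given by the explicit formula. -/
theorem langevin_generator_drift_condition
    (d : ℕ) (hd : 1 ≤ d) (U : EuclideanSpace ℝ (Fin d) → ℝ)
    (hU : ContDiff ℝ 1 U) (h0 : gradient U 0 = 0)
    (ℓ L : ℝ) (hℓ : 0 ≤ ℓ) (hL : 0 ≤ L)
    (hlip : ∀ x y : EuclideanSpace ℝ (Fin d),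
      ‖gradient U x - gradient U y‖ ≤ L * (1 + ‖x‖ ^ ℓ + ‖y‖ ^ ℓ) * ‖x - y‖)
    (hinf : Filter.Tendsto (fun x : EuclideanSpace ℝ (Fin d) => ‖gradient U x‖)
      (Filter.comap norm Filter.atTop) Filter.atTop)
    (κ : ℝ) (hκ : 0 < κ) (M₁ : ℝ) (hM₁ : 0 ≤ M₁)
    (hrad : ∀ x : EuclideanSpace ℝ (Fin d), M₁ ≤ ‖x‖ →
      κ * ‖x‖ * ‖gradient U x‖ ≤ ⟪x, gradient U x⟫)
    (a : ℝ) (ha : 0 < a) :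
    ∃ b : ℝ, 0 ≤ b ∧
      ∀ x : EuclideanSpace ℝ (Fin d),
        a * Real.exp (a * Real.sqrt (1 + ‖x‖ ^ 2)) *
            (-(⟪gradient U x, x⟫ * (1 + ‖x‖ ^ 2) ^ (-(1 : ℝ) / 2))
              + a * ‖x‖ ^ 2 / (1 + ‖x‖ ^ 2)
              + d * (1 + ‖x‖ ^ 2) ^ (-(1 : ℝ) / 2)
              - ‖x‖ ^ 2 * (1 + ‖x‖ ^ 2) ^ (-(3 : ℝ) / 2))
          ≤ -a * Real.exp (a * Real.sqrt (1 + ‖x‖ ^ 2)) + a * b := by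
  -- threshold from the divergence of ‖∇U‖
  set K : ℝ := (a + d + 1) * Real.sqrt 2 / κ with hKdef
  obtain ⟨M, hM⟩ : ∃ M : ℝ, ∀ x : EuclideanSpace ℝ (Fin d),
      M ≤ ‖x‖ → K ≤ ‖gradient U x‖ := by
    have h := hinf.eventually (Filter.eventually_ge_atTop K)
    rw [Filter.eventually_comap, Filter.eventually_atTop] at h
    obtain ⟨M, hM⟩ := h
    exact ⟨M, fun x hx => hM ‖x‖ hx x rfl⟩
  set R : ℝ := max M (max M₁ 1) with hRdef
  have hR1 : (1:ℝ) ≤ R := le_max_of_le_right (le_max_right _ _)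
  have hR0 : (0:ℝ) ≤ R := le_trans zero_le_one hR1
  have hRM : M ≤ R := le_max_left _ _
  have hRM₁ : M₁ ≤ R := le_max_of_le_right (le_max_left _ _)
  set C : ℝ := L * (2 + R ^ ℓ) * R with hCdef
  have hRℓ : (0:ℝ) ≤ R ^ ℓ := Real.rpow_nonneg hR0 ℓ
  have hC0 : 0 ≤ C := by
    apply mul_nonneg (mul_nonneg hL (by linarith)) hR0
  refine ⟨Real.exp (a * Real.sqrt (1 + R ^ 2)) * (C * R + a + d + 1), ?_, ?_⟩
  · have hd0 : (0:ℝ) ≤ (d:ℝ) := Nat.cast_nonneg d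
    have h6 := (Real.exp_pos (a * Real.sqrt (1 + R ^ 2))).le
    have h7 := mul_nonneg hC0 hR0
    apply mul_nonneg h6
    linarith
  intro x
  set b : ℝ := Real.exp (a * Real.sqrt (1 + R ^ 2)) * (C * R + a + d + 1) with hbdef
  set t : ℝ := 1 + ‖x‖ ^ 2 with htdef
  have ht1 : (1:ℝ) ≤ t := by rw [htdef]; linarith [sq_nonneg ‖x‖]
  have ht0 : (0:ℝ) < t := lt_of_lt_of_le zero_lt_one ht1
  set s : ℝ := Real.sqrt t with hsdef
  have hs1 : (1:ℝ) ≤ s := by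
    rw [hsdef, show (1:ℝ) = Real.sqrt 1 by simp]
    exact Real.sqrt_le_sqrt ht1
  have hs0 : (0:ℝ) < s := lt_of_lt_of_le zero_lt_one hs1
  have hss : s ^ 2 = t := Real.sq_sqrt ht0.le
  have hhalf : t ^ (-(1 : ℝ) / 2) = s⁻¹ := by
    rw [show (-(1:ℝ)/2) = -(1/2) by ring, Real.rpow_neg ht0.le, ← Real.sqrt_eq_rpow]
  have h32 : (0:ℝ) ≤ t ^ (-(3 : ℝ) / 2) := Real.rpow_nonneg ht0.le _
  set P : ℝ := ⟪gradient U x, x⟫ with hPdef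
  set E : ℝ := Real.exp (a * s) with hEdef
  have hE0 : (0:ℝ) < E := Real.exp_pos _
  have hd0 : (0:ℝ) ≤ (d:ℝ) := Nat.cast_nonneg d
  clear_value K R C b t s P E
  -- the generic bound:  E * (G + 1) ≤ b
  suffices h : E * ((-(P * t ^ (-(1 : ℝ) / 2))
      + a * ‖x‖ ^ 2 / t + d * t ^ (-(1 : ℝ) / 2)
      - ‖x‖ ^ 2 * t ^ (-(3 : ℝ) / 2)) + 1) ≤ b by
    nlinarith [mul_le_mul_of_nonneg_left h ha.le]
  have hxt : ‖x‖ ^ 2 ≤ t := by rw [htdef]; linarith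
  have hnt : a * ‖x‖ ^ 2 / t ≤ a := by
    rw [div_le_iff₀ ht0]
    exact mul_le_mul_of_nonneg_left hxt ha.le
  have hds : (d:ℝ) * t ^ (-(1 : ℝ) / 2) ≤ d := by
    rw [hhalf]
    exact mul_le_of_le_one_right hd0 (by rw [inv_le_one_iff₀]; right; exact hs1)
  have hlast : (0:ℝ) ≤ ‖x‖ ^ 2 * t ^ (-(3 : ℝ) / 2) :=
    mul_nonneg (sq_nonneg _) h32
  rcases le_or_gt ‖x‖ R with hxR | hxR
  · -- small x : use the polynomial bound on ‖∇U‖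
    have hgrad : ‖gradient U x‖ ≤ C := by
      rw [hCdef]
      have h1 := hlip x 0
      rw [h0, sub_zero, sub_zero] at h1
      rw [norm_zero] at h1
      have h2 : (0:ℝ) ^ ℓ ≤ 1 := Real.rpow_le_one le_rfl zero_le_one hℓ
      have h3 : ‖x‖ ^ ℓ ≤ R ^ ℓ := Real.rpow_le_rpow (norm_nonneg x) hxR hℓ
      calc ‖gradient U x‖ ≤ L * (1 + ‖x‖ ^ ℓ + (0:ℝ) ^ ℓ) * ‖x‖ := h1
        _ ≤ L * (2 + R ^ ℓ) * R := by
            apply mul_le_mul _ hxR (norm_nonneg x) (mul_nonneg hL (by linarith))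
            apply mul_le_mul_of_nonneg_left _ hL
            linarith
      -- done
    have hP : -(P * t ^ (-(1 : ℝ) / 2)) ≤ C * R := by
      rw [hhalf]
      have habs : |P| ≤ C * R := by
        calc |P| ≤ ‖gradient U x‖ * ‖x‖ := by
              rw [hPdef]; exact abs_real_inner_le_norm _ _
          _ ≤ C * R := mul_le_mul hgrad hxR (norm_nonneg x) hC0
      have h1 : -(P * s⁻¹) ≤ |P| * s⁻¹ := by
        rw [show -(P * s⁻¹) = (-P) * s⁻¹ by ring]
        exact mul_le_mul_of_nonneg_right (neg_le_abs P) (by positivity)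
      have h2 : |P| * s⁻¹ ≤ |P| :=
        mul_le_of_le_one_right (abs_nonneg P) (by rw [inv_le_one_iff₀]; right; exact hs1)
      linarith
    have hG : (-(P * t ^ (-(1 : ℝ) / 2))
        + a * ‖x‖ ^ 2 / t + d * t ^ (-(1 : ℝ) / 2)
        - ‖x‖ ^ 2 * t ^ (-(3 : ℝ) / 2)) + 1 ≤ C * R + a + d + 1 := by
      linarith
    have hEb : E ≤ Real.exp (a * Real.sqrt (1 + R ^ 2)) := by
      rw [hEdef]
      apply Real.exp_le_exp.mpr
      apply mul_le_mul_of_nonneg_left _ ha.le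
      rw [hsdef, htdef]
      apply Real.sqrt_le_sqrt
      have h8 : ‖x‖ ^ 2 ≤ R ^ 2 := pow_le_pow_left₀ (norm_nonneg x) hxR 2
      linarith
    have hKnn : (0:ℝ) ≤ C * R + a + d + 1 := by
      have := mul_nonneg hC0 hR0
      linarith
    calc E * ((-(P * t ^ (-(1 : ℝ) / 2))
        + a * ‖x‖ ^ 2 / t + d * t ^ (-(1 : ℝ) / 2)
        - ‖x‖ ^ 2 * t ^ (-(3 : ℝ) / 2)) + 1)
        ≤ E * (C * R + a + d + 1) := by
          apply mul_le_mul_of_nonneg_left hG hE0.le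
      _ ≤ b := by
          rw [hbdef]
          apply mul_le_mul_of_nonneg_right hEb hKnn
  · -- large x : radial coercivity kicks in
    have hx1 : (1:ℝ) ≤ ‖x‖ := le_trans hR1 hxR.le
    have hxM₁ : M₁ ≤ ‖x‖ := le_trans hRM₁ hxR.le
    have hxM : M ≤ ‖x‖ := le_trans hRM hxR.le
    have hgK : K ≤ ‖gradient U x‖ := hM x hxM
    have hrad' : κ * ‖x‖ * ‖gradient U x‖ ≤ P := by
      rw [hPdef, real_inner_comm]; exact hrad x hxM₁
    have hsqrt2 : (0:ℝ) < Real.sqrt 2 := Real.sqrt_pos.mpr (by norm_num)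
    -- s ≤ √2 * ‖x‖
    have hs2 : s ≤ Real.sqrt 2 * ‖x‖ := by
      have h1 : t ≤ 2 * ‖x‖ ^ 2 := by
        rw [htdef]
        have h8 : (1:ℝ) ≤ ‖x‖ ^ 2 := by
          calc (1:ℝ) = 1 ^ 2 := by ring
            _ ≤ ‖x‖ ^ 2 := pow_le_pow_left₀ zero_le_one hx1 2
        linarith
      have h2 : Real.sqrt t ≤ Real.sqrt (2 * ‖x‖ ^ 2) := Real.sqrt_le_sqrt h1
      rwa [Real.sqrt_mul (by norm_num : (0:ℝ) ≤ 2), Real.sqrt_sq (norm_nonneg x),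
        ← hsdef] at h2
    -- P / s ≥ κ ‖∇U‖ / √2 ≥ a + d + 1
    have hgnn : (0:ℝ) ≤ ‖gradient U x‖ := norm_nonneg _
    have hKg : (a + d + 1) * Real.sqrt 2 ≤ κ * ‖gradient U x‖ := by
      have h9 := hgK
      rw [hKdef, div_le_iff₀ hκ] at h9
      rw [mul_comm κ]
      linarith
    have hPs : (a + d + 1) * s ≤ P := by
      have h1 : (a + d + 1) * s ≤ (a + d + 1) * (Real.sqrt 2 * ‖x‖) := by
        apply mul_le_mul_of_nonneg_left hs2 (by linarith)
      have h2 : (a + d + 1) * (Real.sqrt 2 * ‖x‖) ≤ κ * ‖gradient U x‖ * ‖x‖ := by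
        have hxnn : (0:ℝ) ≤ ‖x‖ := norm_nonneg x
        calc (a + d + 1) * (Real.sqrt 2 * ‖x‖) = ((a + d + 1) * Real.sqrt 2) * ‖x‖ := by ring
          _ ≤ κ * ‖gradient U x‖ * ‖x‖ := mul_le_mul_of_nonneg_right hKg hxnn
      have h3 : κ * ‖gradient U x‖ * ‖x‖ = κ * ‖x‖ * ‖gradient U x‖ := by ring
      linarith [hrad']
    have hPt : a + d + 1 ≤ P * t ^ (-(1 : ℝ) / 2) := by
      rw [hhalf]
      have h4 : ((a + d + 1) * s) * s⁻¹ ≤ P * s⁻¹ :=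
        mul_le_mul_of_nonneg_right hPs (by positivity)
      have h5 : ((a + d + 1) * s) * s⁻¹ = a + d + 1 := by field_simp
      linarith
    have hG : (-(P * t ^ (-(1 : ℝ) / 2))
        + a * ‖x‖ ^ 2 / t + d * t ^ (-(1 : ℝ) / 2)
        - ‖x‖ ^ 2 * t ^ (-(3 : ℝ) / 2)) + 1 ≤ 0 := by
      linarith
    have hb0 : (0:ℝ) ≤ b := by
      rw [hbdef]
      have h6 := (Real.exp_pos (a * Real.sqrt (1 + R ^ 2))).le
      have h7 := mul_nonneg hC0 hR0
      apply mul_nonneg h6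
      linarith
    calc E * ((-(P * t ^ (-(1 : ℝ) / 2))
        + a * ‖x‖ ^ 2 / t + d * t ^ (-(1 : ℝ) / 2)
        - ‖x‖ ^ 2 * t ^ (-(3 : ℝ) / 2)) + 1)
        ≤ E * 0 := mul_le_mul_of_nonneg_left hG hE0.le
      _ = 0 := by ring
      _ ≤ b := hb0
end
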